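/- (Partition relation in length two) For all integers s1, s2 ≥ 1 and r1, r2 ≥ 0 one has in ℚ⟦q⟧: [s1, s2; r1, r2] = ∑_{0≤j≤r1, 0≤k≤s2−1} (−1)^k·binom(s1−1+k, k)·binom(r2+j, j)·[r2+j+1, r1−j+1; s2−1−k, s1−1+k]. -/

import Mathlib

open Finset

open Classical in
/-- The bi-bracket `[s₁,…,s_l; r₁,…,r_l] ∈ ℚ⟦q⟧`. -/
noncomputable def biBracket {l : ℕ} (s r : Fin l → ℕ) : PowerSeries ℚ :=
  PowerSeries.mk fun n =>
    ∑ u : Fin l → Fin (n + 1), ∑ v : Fin l → Fin (n + 1),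
      if (∀ i j : Fin l, i < j → (u j : ℕ) < (u i : ℕ)) ∧ (∀ j, 0 < (u j : ℕ)) ∧
          (∀ j, 0 < (v j : ℕ)) ∧ (∑ j, (u j : ℕ) * (v j : ℕ)) = n
      then ∏ j, (u j : ℚ) ^ (r j) / (Nat.factorial (r j)) *
            ((v j : ℚ) ^ (s j - 1) / (Nat.factorial (s j - 1)))
      else 0

open Nat in
lemma biBracket_sum_fin_two_fun {M : Type*} [AddCommMonoid M] (n : ℕ)
    (f : (Fin 2 → Fin (n+1)) → M) :
    ∑ u : Fin 2 → Fin (n+1), f u = ∑ x : Fin (n+1), ∑ y : Fin (n+1), f ![x, y] := by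
  rw [← (piFinTwoEquiv fun _ => Fin (n+1)).symm.sum_comp, Fintype.sum_prod_type]
  rfl

lemma biBracket_sum4 (n : ℕ) (g : ℕ → ℕ → ℕ → ℕ → ℚ) :
    ∑ x : Fin (n+1), ∑ y : Fin (n+1), ∑ z : Fin (n+1), ∑ w : Fin (n+1), g ↑x ↑y ↑z ↑w
    = ∑ x ∈ range (n+1), ∑ y ∈ range (n+1), ∑ z ∈ range (n+1), ∑ w ∈ range (n+1), g x y z w := by
  simp only [Fin.sum_univ_eq_sum_range]
  rw [Fin.sum_univ_eq_sum_range
    (fun x => ∑ y : Fin (n+1), ∑ z : Fin (n+1), ∑ i ∈ range (n+1), g x ↑y ↑z i)]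
  refine Finset.sum_congr rfl fun x _ => ?_
  rw [Fin.sum_univ_eq_sum_range
    (fun y => ∑ z : Fin (n+1), ∑ i ∈ range (n+1), g x y ↑z i)]
  refine Finset.sum_congr rfl fun y _ => ?_
  rw [Fin.sum_univ_eq_sum_range (fun z => ∑ i ∈ range (n+1), g x y z i)]

/-- The index set of the coefficient sum: quadruples `((u₁,u₂),(v₁,v₂))`. -/
def biBracketT (n : ℕ) : Finset ((ℕ × ℕ) × ℕ × ℕ) :=
  ((range (n+1) ×ˢ range (n+1)) ×ˢ (range (n+1) ×ˢ range (n+1))).filter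
    (fun p => p.1.2 < p.1.1 ∧ (0 < p.1.1 ∧ 0 < p.1.2) ∧ (0 < p.2.1 ∧ 0 < p.2.2) ∧
      p.1.1 * p.2.1 + p.1.2 * p.2.2 = n)

open Nat in
lemma coeff_biBracket_two (a b c d n : ℕ) :
    PowerSeries.coeff (R := ℚ) n (biBracket ![a, b] ![c, d]) =
    ∑ p ∈ biBracketT n, ((p.1.1 : ℚ) ^ c / (Nat.factorial c) *
        ((p.2.1 : ℚ) ^ (a - 1) / (Nat.factorial (a - 1))) *
        ((p.1.2 : ℚ) ^ d / (Nat.factorial d) *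
        ((p.2.2 : ℚ) ^ (b - 1) / (Nat.factorial (b - 1))))) := by
  rw [biBracket, PowerSeries.coeff_mk]
  rw [biBracket_sum_fin_two_fun]
  simp only [biBracket_sum_fin_two_fun n (f := fun v => _)]
  simp (config := { decide := true }) only [Fin.forall_fin_two, Fin.sum_univ_two,
    Fin.prod_univ_two, Matrix.cons_val_zero, Matrix.cons_val_one, Matrix.head_cons, Fin.isValue,
    false_implies, true_implies, true_and, and_true]
  rw [biBracket_sum4 n (fun u1 u2 v1 v2 =>
    if u2 < u1 ∧ (0 < u1 ∧ 0 < u2) ∧ (0 < v1 ∧ 0 < v2) ∧ u1 * v1 + u2 * v2 = n then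
      (u1 : ℚ) ^ c / (Nat.factorial c) * ((v1 : ℚ) ^ (a - 1) / (Nat.factorial (a - 1))) *
        ((u2 : ℚ) ^ d / (Nat.factorial d) * ((v2 : ℚ) ^ (b - 1) / (Nat.factorial (b - 1))))
    else 0)]
  rw [biBracketT, sum_filter]
  simp only [Finset.sum_product]

open Nat in
lemma biBracket_lemA (r1 r2 : ℕ) (x y : ℚ) :
    ∑ j ∈ range (r1+1), ((r2+j).choose j : ℚ) *
        (x ^ (r2+j) / ((r2+j)! : ℚ) * (y ^ (r1-j) / ((r1-j)! : ℚ)))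
    = (x+y) ^ r1 / (r1 ! : ℚ) * (x ^ r2 / (r2 ! : ℚ)) := by
  rw [add_pow, sum_div, sum_mul]
  refine sum_congr rfl fun j hj => ?_
  have hj' : j ≤ r1 := Nat.lt_succ_iff.mp (mem_range.mp hj)
  have h1 : ((r2+j).choose j : ℚ) * r2 ! * j ! = ((r2+j)! : ℚ) := by
    exact_mod_cast congrArg (Nat.cast (R := ℚ)) (Nat.add_choose_mul_factorial_mul_factorial r2 j)
  have h2 : (r1.choose j : ℚ) * j ! * (r1-j)! = (r1 ! : ℚ) := by
    exact_mod_cast congrArg (Nat.cast (R := ℚ)) (Nat.choose_mul_factorial_mul_factorial hj')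
  have n1 : ((r2+j)! : ℚ) ≠ 0 := Nat.cast_ne_zero.mpr (Nat.factorial_ne_zero _)
  have n2 : ((r1-j)! : ℚ) ≠ 0 := Nat.cast_ne_zero.mpr (Nat.factorial_ne_zero _)
  have n3 : (r1 ! : ℚ) ≠ 0 := Nat.cast_ne_zero.mpr (Nat.factorial_ne_zero _)
  have n4 : (r2 ! : ℚ) ≠ 0 := Nat.cast_ne_zero.mpr (Nat.factorial_ne_zero _)
  rw [pow_add]
  field_simp
  linear_combination (x ^ r2 * x ^ j * y ^ (r1-j) * ((r1-j)! : ℚ) * (r1.choose j : ℚ)) * h1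
    - (x ^ r2 * x ^ j * y ^ (r1-j) * ((r2+j).choose j : ℚ) * (r2 ! : ℚ)) * h2

open Nat in
lemma biBracket_lemB (m1 m2 : ℕ) (x y : ℚ) :
    ∑ k ∈ range (m2+1), (-1 : ℚ) ^ k * ((m1+k).choose k : ℚ) *
        ((x+y) ^ (m2-k) / ((m2-k)! : ℚ) * (x ^ (m1+k) / ((m1+k)! : ℚ)))
    = y ^ m2 / (m2 ! : ℚ) * (x ^ m1 / (m1 ! : ℚ)) := by
  have hy : y ^ m2 = ∑ k ∈ range (m2+1), (-x) ^ k * (x+y) ^ (m2-k) * (m2.choose k : ℚ) := by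
    rw [← add_pow]; ring_nf
  rw [hy, sum_div, sum_mul]
  refine sum_congr rfl fun k hk => ?_
  have hk' : k ≤ m2 := Nat.lt_succ_iff.mp (mem_range.mp hk)
  have h1 : ((m1+k).choose k : ℚ) * m1 ! * k ! = ((m1+k)! : ℚ) := by
    exact_mod_cast congrArg (Nat.cast (R := ℚ)) (Nat.add_choose_mul_factorial_mul_factorial m1 k)
  have h2 : (m2.choose k : ℚ) * k ! * (m2-k)! = (m2 ! : ℚ) := by
    exact_mod_cast congrArg (Nat.cast (R := ℚ)) (Nat.choose_mul_factorial_mul_factorial hk')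
  have n1 : ((m1+k)! : ℚ) ≠ 0 := Nat.cast_ne_zero.mpr (Nat.factorial_ne_zero _)
  have n2 : ((m2-k)! : ℚ) ≠ 0 := Nat.cast_ne_zero.mpr (Nat.factorial_ne_zero _)
  have n3 : (m1 ! : ℚ) ≠ 0 := Nat.cast_ne_zero.mpr (Nat.factorial_ne_zero _)
  have n4 : (m2 ! : ℚ) ≠ 0 := Nat.cast_ne_zero.mpr (Nat.factorial_ne_zero _)
  rw [pow_add, neg_pow]
  field_simp
  linear_combination ((-1:ℚ)^k * x^m1 * x^k * (x+y)^(m2-k) * ((m2-k)! : ℚ) * (m2.choose k : ℚ)) * h1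
    - ((-1:ℚ)^k * x^m1 * x^k * (x+y)^(m2-k) * ((m1+k).choose k : ℚ) * (m1 ! : ℚ)) * h2

lemma biBracket_sum_comm3 {M : Type*} [AddCommMonoid M] {α β γ : Type*} (s : Finset α)
    (t : Finset β) (u : Finset γ) (f : α → β → γ → M) :
    ∑ a ∈ s, ∑ b ∈ t, ∑ c ∈ u, f a b c = ∑ c ∈ u, ∑ a ∈ s, ∑ b ∈ t, f a b c :=
  calc ∑ a ∈ s, ∑ b ∈ t, ∑ c ∈ u, f a b c
      = ∑ a ∈ s, ∑ c ∈ u, ∑ b ∈ t, f a b c :=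
        Finset.sum_congr rfl fun a _ => Finset.sum_comm
    _ = ∑ c ∈ u, ∑ a ∈ s, ∑ b ∈ t, f a b c := Finset.sum_comm

/-- The conjugation involution on the index set. -/
def biBracketPhi (p : (ℕ × ℕ) × ℕ × ℕ) : (ℕ × ℕ) × ℕ × ℕ :=
  ((p.2.1 + p.2.2, p.2.1), (p.1.2, p.1.1 - p.1.2))

lemma biBracketT_facts {n : ℕ} {p : (ℕ × ℕ) × ℕ × ℕ} (hp : p ∈ biBracketT n) :
    p.1.1 ≤ p.1.1 * p.2.1 ∧ p.2.1 ≤ p.1.1 * p.2.1 ∧ p.1.2 ≤ p.1.2 * p.2.2 ∧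
    p.2.2 ≤ p.1.2 * p.2.2 ∧ p.1.2 < p.1.1 ∧ (0 < p.1.1 ∧ 0 < p.1.2) ∧
    (0 < p.2.1 ∧ 0 < p.2.2) ∧ p.1.1 * p.2.1 + p.1.2 * p.2.2 = n := by
  obtain ⟨⟨u1, u2⟩, v1, v2⟩ := p
  simp only [biBracketT, mem_filter, mem_product, mem_range] at hp
  obtain ⟨-, hlt, ⟨hu1, hu2⟩, ⟨hv1, hv2⟩, hsum⟩ := hp
  exact ⟨Nat.le_mul_of_pos_right _ hv1, Nat.le_mul_of_pos_left _ hu1,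
    Nat.le_mul_of_pos_right _ hv2, Nat.le_mul_of_pos_left _ hu2,
    hlt, ⟨hu1, hu2⟩, ⟨hv1, hv2⟩, hsum⟩

lemma biBracketPhi_mem {n : ℕ} {p : (ℕ × ℕ) × ℕ × ℕ} (hp : p ∈ biBracketT n) :
    biBracketPhi p ∈ biBracketT n := by
  obtain ⟨f1, f2, f3, f4, hlt, ⟨hu1, hu2⟩, ⟨hv1, hv2⟩, hsum⟩ := biBracketT_facts hp
  obtain ⟨⟨u1, u2⟩, v1, v2⟩ := p
  simp only at f1 f2 f3 f4 hlt hu1 hu2 hv1 hv2 hsum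
  have hs : (v1 + v2) * u2 + v1 * (u1 - u2) = n := by
    obtain ⟨t, rfl⟩ : ∃ t, u1 = u2 + t := ⟨u1 - u2, by omega⟩
    rw [Nat.add_sub_cancel_left, ← hsum]; ring
  simp only [biBracketPhi, biBracketT, mem_filter, mem_product, mem_range]
  refine ⟨⟨⟨by omega, by omega⟩, by omega, by omega⟩, by omega, ⟨by omega, by omega⟩,
    ⟨by omega, by omega⟩, hs⟩

lemma biBracketPhi_invol {n : ℕ} {p : (ℕ × ℕ) × ℕ × ℕ} (hp : p ∈ biBracketT n) :
    biBracketPhi (biBracketPhi p) = p := by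
  obtain ⟨-, -, -, -, hlt, -, -, -⟩ := biBracketT_facts hp
  obtain ⟨⟨u1, u2⟩, v1, v2⟩ := p
  simp only at hlt
  simp only [biBracketPhi, Prod.mk.injEq, and_true, true_and]
  omega

open Nat in
/-- Partition relation in length two: for `s₁, s₂ ≥ 1` and `r₁, r₂ ≥ 0`,
`[s₁,s₂; r₁,r₂] = ∑_{0≤j≤r₁, 0≤k≤s₂−1} (−1)^k·binom(s₁−1+k,k)·binom(r₂+j,j)·
  [r₂+j+1, r₁−j+1; s₂−1−k, s₁−1+k]`. -/
theorem biBracket_partition_two (s1 s2 : ℕ) (h1 : 1 ≤ s1) (h2 : 1 ≤ s2) (r1 r2 : ℕ) :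
    biBracket ![s1, s2] ![r1, r2] =
      ∑ j ∈ Finset.range (r1 + 1), ∑ k ∈ Finset.range s2,
        ((-1 : ℚ) ^ k * ((s1 - 1 + k).choose k) * ((r2 + j).choose j)) •
          biBracket ![r2 + j + 1, r1 - j + 1] ![s2 - 1 - k, s1 - 1 + k] := by
  obtain ⟨m1, rfl⟩ : ∃ m, s1 = m + 1 := ⟨s1 - 1, (Nat.succ_pred_eq_of_pos h1).symm⟩
  obtain ⟨m2, rfl⟩ : ∃ m, s2 = m + 1 := ⟨s2 - 1, (Nat.succ_pred_eq_of_pos h2).symm⟩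
  ext n
  simp only [map_sum, map_smul, smul_eq_mul, coeff_biBracket_two, Nat.add_sub_cancel,
    Finset.mul_sum]
  rw [biBracket_sum_comm3]
  refine Finset.sum_nbij' biBracketPhi biBracketPhi (fun a ha => biBracketPhi_mem ha)
    (fun a ha => biBracketPhi_mem ha) (fun a ha => biBracketPhi_invol ha)
    (fun a ha => biBracketPhi_invol ha) (fun p hp => ?_)
  obtain ⟨-, -, -, -, hlt, ⟨hu1, hu2⟩, ⟨hv1, hv2⟩, -⟩ := biBracketT_facts hp
  obtain ⟨⟨u1, u2⟩, v1, v2⟩ := p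
  simp only at hlt hu1 hu2 hv1 hv2
  simp only [biBracketPhi]
  have hle : u2 ≤ u1 := le_of_lt hlt
  symm
  trans (∑ j ∈ range (r1+1), ((r2+j).choose j : ℚ) *
          ((u2 : ℚ) ^ (r2+j) / ((r2+j)! : ℚ) *
            (((u1 : ℚ) - (u2 : ℚ)) ^ (r1-j) / ((r1-j)! : ℚ)))) *
        (∑ k ∈ range (m2+1), (-1 : ℚ) ^ k * ((m1+k).choose k : ℚ) *
          (((v1 : ℚ) + (v2 : ℚ)) ^ (m2-k) / ((m2-k)! : ℚ) *
            ((v1 : ℚ) ^ (m1+k) / ((m1+k)! : ℚ))))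
  · rw [Finset.sum_mul_sum]
    refine sum_congr rfl fun j _ => sum_congr rfl fun k _ => ?_
    push_cast [Nat.cast_sub hle]
    ring
  · rw [biBracket_lemA, biBracket_lemB]
    ring
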